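/- Let (Ω,μ) be a σ-finite measure space, m : Ω → ℝ measurable, and let H be the multiplication operator Hu = mu on L²(Ω,μ) with domain D(H) = {u ∈ L²(μ) : mu ∈ L²(μ)}. For λ ∈ ℝ set V_λ = {u ∈ L²(μ) : u = 0 almost everywhere on {m > λ}}. Then: (a) V_λ is a closed subspace; its orthogonal projection P_λ maps D(H) into D(H) and satisfies P_λ H u = H P_λ u for all u ∈ D(H); and (Hu,u) ≤ λ (u,u) for all u ∈ V_λ ∩ D(H). (b) Maximality: if W ⊆ L²(μ) is any closed subspace whose orthogonal projection P maps D(H) into D(H) with P H u = H P u for all u ∈ D(H), and (Hu,u) ≤ λ (u,u) for all u ∈ W ∩ D(H), then W ⊆ V_λ. Hence V_λ = E(λ)L²(μ), where {E(λ)} is the spectral family of H. -/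

import Mathlib

open MeasureTheory Complex Filter Topology
open scoped ENNReal

/-- `P` is the orthogonal projection of an inner product space onto the set `V`:
every `P u` lies in `V` and `u - P u` is orthogonal to `V`. -/
def IsOrthogonalProjectionOnto {X : Type*} [NormedAddCommGroup X] [InnerProductSpace ℂ X]
    (V : Set X) (P : X →L[ℂ] X) : Prop :=
  ∀ u : X, P u ∈ V ∧ ∀ v ∈ V, @inner ℂ _ _ (u - P u) v = (0 : ℂ)

namespace Stmt16Aux
variable {Ω : Type*} [MeasurableSpace Ω] {μ : Measure Ω} {m : Ω → ℝ}

lemma memℒp_mul (hm : Measurable m) {f : ℝ → ℂ} (hf : Measurable f) {C : ℝ}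
    (hC : ∀ t, ‖f t‖ ≤ C) (w : Lp ℂ 2 μ) :
    MemLp (fun x => f (m x) * w x) 2 μ := by
  refine MemLp.of_le_mul (c := C) (Lp.memLp w)
    (((hf.comp hm).aestronglyMeasurable).mul (Lp.aestronglyMeasurable w)) ?_
  refine Eventually.of_forall fun x => ?_
  rw [norm_mul]
  exact mul_le_mul_of_nonneg_right (hC (m x)) (norm_nonneg _)

lemma of_graph {H : Lp ℂ 2 μ →ₗ.[ℂ] Lp ℂ 2 μ}
    (hgraph : ∀ u v : Lp ℂ 2 μ,
      (u, v) ∈ H.graph ↔ (v : Ω → ℂ) =ᵐ[μ] fun x => (m x : ℂ) * u x)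
    {u v : Lp ℂ 2 μ} (h : (v : Ω → ℂ) =ᵐ[μ] fun x => (m x : ℂ) * u x) :
    ∃ hu : u ∈ H.domain, H ⟨u, hu⟩ = v := by
  obtain ⟨y, hy1, hy2⟩ := H.mem_graph_iff.mp ((hgraph u v).mpr h)
  have hy1' : (y : Lp ℂ 2 μ) = u := hy1
  have hy2' : H y = v := hy2
  refine ⟨hy1' ▸ y.2, ?_⟩
  rw [← hy2']
  congr 1
  exact Subtype.ext hy1'.symm

lemma H_ae {H : Lp ℂ 2 μ →ₗ.[ℂ] Lp ℂ 2 μ}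
    (hgraph : ∀ u v : Lp ℂ 2 μ,
      (u, v) ∈ H.graph ↔ (v : Ω → ℂ) =ᵐ[μ] fun x => (m x : ℂ) * u x)
    {u : Lp ℂ 2 μ} (hu : u ∈ H.domain) :
    (H ⟨u, hu⟩ : Ω → ℂ) =ᵐ[μ] fun x => (m x : ℂ) * u x :=
  (hgraph u _).mp (H.mem_graph ⟨u, hu⟩)

lemma norm_sq_integral (u : Lp ℂ 2 μ) :
    Integrable (fun x => ‖u x‖ ^ 2) μ ∧ ‖u‖ ^ 2 = ∫ x, ‖u x‖ ^ 2 ∂μ := by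
  have hint : Integrable (fun x => @inner ℂ ℂ _ (u x) (u x)) μ := L2.integrable_inner u u
  have hcongr : (fun x => RCLike.re (@inner ℂ ℂ _ (u x) (u x))) =ᵐ[μ] fun x => ‖u x‖ ^ 2 :=
    Eventually.of_forall fun x => inner_self_eq_norm_sq (𝕜 := ℂ) (u x)
  constructor
  · exact (hint.re).congr hcongr
  · rw [← inner_self_eq_norm_sq (𝕜 := ℂ) u, L2.inner_def, ← integral_re hint]
    exact integral_congr_ae hcongr

lemma inner_H_re {u Hu : Lp ℂ 2 μ}
    (hae : (Hu : Ω → ℂ) =ᵐ[μ] fun x => (m x : ℂ) * u x) :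
    Integrable (fun x => m x * ‖u x‖ ^ 2) μ ∧
      (@inner ℂ _ _ Hu u).re = ∫ x, m x * ‖u x‖ ^ 2 ∂μ := by
  have hint : Integrable (fun x => @inner ℂ ℂ _ (Hu x) (u x)) μ := L2.integrable_inner Hu u
  have hcongr : (fun x => RCLike.re (@inner ℂ ℂ _ (Hu x) (u x))) =ᵐ[μ]
      fun x => m x * ‖u x‖ ^ 2 := by
    filter_upwards [hae] with x hx
    have h : (@inner ℂ ℂ _ (Hu x) (u x)) = (starRingEnd ℂ) (Hu x) * u x := RCLike.inner_apply' _ _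
    rw [h, hx]
    simp only [map_mul, Complex.conj_ofReal, RCLike.re_to_complex]
    rw [mul_assoc, mul_comm ((starRingEnd ℂ) (u x)) (u x), Complex.mul_conj]
    rw [← Complex.ofReal_mul]
    simp [Complex.normSq_eq_norm_sq, ← Complex.ofReal_pow]
  constructor
  · exact (hint.re).congr hcongr
  · have h1 : (@inner ℂ _ _ Hu u).re = RCLike.re (@inner ℂ _ _ Hu u) := rfl
    rw [h1, L2.inner_def, ← integral_re hint]
    exact integral_congr_ae hcongr

/-- The set `V_λ` is closed under subtraction. -/
lemma S_sub (lam : ℝ) :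
    ∀ a ∈ {u : Lp ℂ 2 μ | ∀ᵐ x ∂μ, lam < m x → u x = 0},
    ∀ b ∈ {u : Lp ℂ 2 μ | ∀ᵐ x ∂μ, lam < m x → u x = 0},
      a - b ∈ {u : Lp ℂ 2 μ | ∀ᵐ x ∂μ, lam < m x → u x = 0} := by
  intro a ha b hb
  filter_upwards [ha, hb, Lp.coeFn_sub a b] with x hxa hxb hxs hlt
  rw [hxs, Pi.sub_apply, hxa hlt, hxb hlt, sub_zero]

lemma proj_unique {V : Set (Lp ℂ 2 μ)} {P : Lp ℂ 2 μ →L[ℂ] Lp ℂ 2 μ}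
    (hP : IsOrthogonalProjectionOnto V P)
    (hsub : ∀ a ∈ V, ∀ b ∈ V, a - b ∈ V)
    {u q : Lp ℂ 2 μ} (hq : q ∈ V)
    (horth : ∀ v ∈ V, @inner ℂ _ _ (u - q) v = (0 : ℂ)) :
    P u = q := by
  have hd : P u - q ∈ V := hsub _ (hP u).1 _ hq
  have h1 : @inner ℂ _ _ (P u - q) (P u - q) = 0 := by
    have e1 : @inner ℂ _ _ (u - q) (P u - q) = 0 := horth _ hd
    have e2 : @inner ℂ _ _ (u - P u) (P u - q) = 0 := (hP u).2 _ hd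
    have h : (P u - q) = (u - q) - (u - P u) := by abel
    calc @inner ℂ _ _ (P u - q) (P u - q)
        = @inner ℂ _ _ ((u - q) - (u - P u)) (P u - q) := by rw [← h]
      _ = 0 := by rw [inner_sub_left, e1, e2, sub_zero]
  exact sub_eq_zero.mp (inner_self_eq_zero.mp h1)

lemma fI_meas (lam : ℝ) : Measurable fun t : ℝ => if lam < t then (0 : ℂ) else 1 :=
  Measurable.ite (measurableSet_lt measurable_const measurable_id)
    measurable_const measurable_const

lemma fI_bd (lam : ℝ) : ∀ t : ℝ, ‖if lam < t then (0 : ℂ) else 1‖ ≤ 1 := fun t => by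
  by_cases h : lam < t <;> simp [h]

/-- Multiplication by the indicator of `{m ≤ λ}` as a map on `L²`. -/
noncomputable def indL (hm : Measurable m) (lam : ℝ) (w : Lp ℂ 2 μ) : Lp ℂ 2 μ :=
  (memℒp_mul hm (fI_meas lam) (fI_bd lam) w).toLp _

lemma indL_ae (hm : Measurable m) (lam : ℝ) (w : Lp ℂ 2 μ) :
    (indL hm lam w : Ω → ℂ) =ᵐ[μ] fun x => (if lam < m x then (0 : ℂ) else 1) * w x :=
  MemLp.coeFn_toLp _

/-- Orthogonal projection onto `V_λ` is multiplication by the indicator of `{m ≤ λ}`. -/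
lemma proj_eq_indicator (hm : Measurable m) (lam : ℝ)
    {P : Lp ℂ 2 μ →L[ℂ] Lp ℂ 2 μ}
    (hP : IsOrthogonalProjectionOnto {u : Lp ℂ 2 μ | ∀ᵐ x ∂μ, lam < m x → u x = 0} P)
    (w : Lp ℂ 2 μ) :
    P w = indL hm lam w := by
  have hqae := indL_ae hm lam w
  refine proj_unique hP (S_sub lam) ?_ ?_
  · filter_upwards [hqae] with x hx hlt
    rw [hx, if_pos hlt, zero_mul]
  · intro v hv
    rw [L2.inner_def]
    have : (fun x => @inner ℂ ℂ _ ((w - indL hm lam w : Lp ℂ 2 μ) x) (v x)) =ᵐ[μ]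
        fun _ => (0 : ℂ) := by
      filter_upwards [Lp.coeFn_sub w (indL hm lam w), hqae, hv] with x h1 h2 h3
      rw [h1, Pi.sub_apply, h2]
      by_cases hlt : lam < m x
      · rw [h3 hlt]
        simp
      · rw [if_neg hlt, one_mul, sub_self]
        simp only [inner_zero_left]
    rw [integral_congr_ae this, integral_zero]

lemma part_a2 (hm : Measurable m) {H : Lp ℂ 2 μ →ₗ.[ℂ] Lp ℂ 2 μ}
    (hgraph : ∀ u v : Lp ℂ 2 μ,
      (u, v) ∈ H.graph ↔ (v : Ω → ℂ) =ᵐ[μ] fun x => (m x : ℂ) * u x)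
    (lam : ℝ) {P : Lp ℂ 2 μ →L[ℂ] Lp ℂ 2 μ}
    (hP : IsOrthogonalProjectionOnto {u : Lp ℂ 2 μ | ∀ᵐ x ∂μ, lam < m x → u x = 0} P)
    (u : Lp ℂ 2 μ) (hu : u ∈ H.domain) :
    ∃ hPu : P u ∈ H.domain, H ⟨P u, hPu⟩ = P (H ⟨u, hu⟩) := by
  rw [proj_eq_indicator hm lam hP u, proj_eq_indicator hm lam hP (H ⟨u, hu⟩)]
  apply of_graph hgraph
  filter_upwards [indL_ae hm lam u, indL_ae hm lam (H ⟨u, hu⟩), H_ae hgraph hu]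
    with x e1 e2 e3
  rw [e2, e3, e1]
  ring

lemma isClosed_S (hm : Measurable m) (lam : ℝ) :
    IsClosed {u : Lp ℂ 2 μ | ∀ᵐ x ∂μ, lam < m x → u x = 0} := by
  have hA : MeasurableSet {x | lam < m x} := measurableSet_lt measurable_const hm
  have hrepr : {u : Lp ℂ 2 μ | ∀ᵐ x ∂μ, lam < m x → u x = 0} =
      ⋂ g ∈ {g : Lp ℂ 2 μ | ∀ᵐ x ∂μ, ¬ lam < m x → g x = 0},
        {u : Lp ℂ 2 μ | @inner ℂ _ _ g u = 0} := by
    ext u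
    simp only [Set.mem_iInter, Set.mem_setOf_eq]
    constructor
    · intro hu g hg
      rw [L2.inner_def]
      have : (fun x => @inner ℂ ℂ _ (g x) (u x)) =ᵐ[μ] fun _ => (0 : ℂ) := by
        filter_upwards [hu, hg] with x hx hgx
        by_cases hxa : lam < m x
        · simp [hx hxa]
        · have : g x = 0 := hgx hxa
          simp [this]
      rw [integral_congr_ae this, integral_zero]
    · intro h
      set A : Set Ω := {x | lam < m x} with hAdef
      have hmem : MemLp (A.indicator (u : Ω → ℂ)) 2 μ := (Lp.memLp u).indicator hA
      set g : Lp ℂ 2 μ := hmem.toLp _ with hgdef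
      have hgae : (g : Ω → ℂ) =ᵐ[μ] A.indicator (u : Ω → ℂ) := hmem.coeFn_toLp
      have hg : ∀ᵐ x ∂μ, ¬ lam < m x → g x = 0 := by
        filter_upwards [hgae] with x hx hnx
        rw [hx]
        exact Set.indicator_of_notMem (by exact hnx) (u : Ω → ℂ)
      have h0 := h g hg
      rw [L2.inner_def] at h0
      have hint : Integrable (fun x => @inner ℂ ℂ _ (g x) (u x)) μ := L2.integrable_inner g u
      have hre : (fun x => RCLike.re (@inner ℂ ℂ _ (g x) (u x))) =ᵐ[μ]
          A.indicator fun x => ‖u x‖ ^ 2 := by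
        filter_upwards [hgae] with x hx
        have hin : @inner ℂ ℂ _ (g x) (u x) = (starRingEnd ℂ) (g x) * u x := RCLike.inner_apply' _ _
        by_cases hxA : x ∈ A
        · rw [hin, hx, Set.indicator_of_mem hxA, Set.indicator_of_mem hxA,
            mul_comm, Complex.mul_conj]
          simp [Complex.normSq_eq_norm_sq, ← Complex.ofReal_pow]
        · rw [hin, hx, Set.indicator_of_notMem hxA, Set.indicator_of_notMem hxA]
          simp
      have hint2 : Integrable (A.indicator fun x => ‖u x‖ ^ 2) μ := (hint.re).congr hre
      have hzero : ∫ x, A.indicator (fun x => ‖u x‖ ^ 2) x ∂μ = 0 := by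
        rw [← integral_congr_ae hre, integral_re hint, h0]
        simp
      have hnonneg : 0 ≤ᵐ[μ] A.indicator fun x => ‖u x‖ ^ 2 :=
        Eventually.of_forall fun x => Set.indicator_nonneg (fun y _ => by positivity) x
      have := (integral_eq_zero_iff_of_nonneg_ae hnonneg hint2).mp hzero
      filter_upwards [this] with x hx hlt
      have hx0 : A.indicator (fun x => ‖u x‖ ^ 2) x = 0 := hx
      rw [Set.indicator_of_mem (by exact hlt)] at hx0
      simpa using hx0
  rw [hrepr]
  exact isClosed_biInter fun g hg =>
    isClosed_eq (Continuous.inner continuous_const continuous_id) continuous_const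


lemma part_a3 (hm : Measurable m) {H : Lp ℂ 2 μ →ₗ.[ℂ] Lp ℂ 2 μ}
    (hgraph : ∀ u v : Lp ℂ 2 μ,
      (u, v) ∈ H.graph ↔ (v : Ω → ℂ) =ᵐ[μ] fun x => (m x : ℂ) * u x)
    (lam : ℝ) (u : Lp ℂ 2 μ) (hu : u ∈ H.domain)
    (hS : ∀ᵐ x ∂μ, lam < m x → u x = 0) :
    (@inner ℂ _ _ (H ⟨u, hu⟩) u).re ≤ lam * ‖u‖ ^ 2 := by
  obtain ⟨hint, heq⟩ := inner_H_re (H_ae hgraph hu)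
  obtain ⟨hint2, heq2⟩ := norm_sq_integral u
  rw [heq, heq2, ← integral_const_mul]
  refine integral_mono_ae hint (hint2.const_mul lam) ?_
  filter_upwards [hS] with x hx
  by_cases hlt : lam < m x
  · simp [hx hlt]
  · exact mul_le_mul_of_nonneg_right (not_lt.mp hlt) (by positivity)

section PartB

variable {H : Lp ℂ 2 μ →ₗ.[ℂ] Lp ℂ 2 μ} {W : Submodule ℂ (Lp ℂ 2 μ)}
  {P : Lp ℂ 2 μ →L[ℂ] Lp ℂ 2 μ}

lemma P_fix (hP : IsOrthogonalProjectionOnto (W : Set (Lp ℂ 2 μ)) P)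
    {w : Lp ℂ 2 μ} (hw : w ∈ W) : P w = w :=
  proj_unique hP (fun a ha b hb => W.sub_mem ha hb) hw
    (fun v _ => by rw [sub_self, inner_zero_left])

lemma res_meas (z : ℂ) : Measurable fun t : ℝ => ((t : ℂ) - z)⁻¹ :=
  ((Complex.measurable_ofReal.sub measurable_const).inv)

lemma res_bd {z : ℂ} (hz : z.im ≠ 0) : ∀ t : ℝ, ‖((t : ℂ) - z)⁻¹‖ ≤ |z.im|⁻¹ := by
  intro t
  rw [norm_inv]
  have h1 : |z.im| ≤ ‖(t : ℂ) - z‖ := by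
    have : |((t : ℂ) - z).im| = |z.im| := by simp [Complex.sub_im]
    rw [← this]
    exact Complex.abs_im_le_norm _
  exact inv_anti₀ (abs_pos.mpr hz) h1

lemma res_ne {z : ℂ} (hz : z.im ≠ 0) (t : ℝ) : (t : ℂ) - z ≠ 0 := by
  intro hcon
  apply hz
  have := congrArg Complex.im hcon
  simpa using this.symm

/-- `(m - z)⁻¹ • w` as an element of `L²`. -/
noncomputable def resL (hm : Measurable m) {z : ℂ} (hz : z.im ≠ 0) (w : Lp ℂ 2 μ) :
    Lp ℂ 2 μ :=
  (memℒp_mul hm (res_meas z) (res_bd hz) w).toLp _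

lemma resL_ae (hm : Measurable m) {z : ℂ} (hz : z.im ≠ 0) (w : Lp ℂ 2 μ) :
    (resL hm hz w : Ω → ℂ) =ᵐ[μ] fun x => ((m x : ℂ) - z)⁻¹ * w x :=
  MemLp.coeFn_toLp _

/-- The subspace `W` is invariant under every resolvent `(m - z)⁻¹`. -/
lemma resolvent_invariant (hm : Measurable m)
    (hgraph : ∀ u v : Lp ℂ 2 μ,
      (u, v) ∈ H.graph ↔ (v : Ω → ℂ) =ᵐ[μ] fun x => (m x : ℂ) * u x)
    (hP : IsOrthogonalProjectionOnto (W : Set (Lp ℂ 2 μ)) P)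
    (hcomm : ∀ u : Lp ℂ 2 μ, ∀ hu : u ∈ H.domain,
      ∃ hPu : P u ∈ H.domain, H ⟨P u, hPu⟩ = P (H ⟨u, hu⟩))
    {z : ℂ} (hz : z.im ≠ 0) {w : Lp ℂ 2 μ} (hw : w ∈ W) :
    resL hm hz w ∈ W := by
  set f := resL hm hz w with hfdef
  have hae := resL_ae hm hz w
  have h1 : ((w + z • f : Lp ℂ 2 μ) : Ω → ℂ) =ᵐ[μ] fun x => (m x : ℂ) * f x := by
    filter_upwards [hae, Lp.coeFn_add w (z • f), Lp.coeFn_smul z f] with x e1 e2 e3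
    rw [e2, Pi.add_apply, e3, Pi.smul_apply, smul_eq_mul, e1]
    have hne := res_ne hz (m x)
    field_simp
    ring
  obtain ⟨hf, hHf⟩ := of_graph hgraph h1
  obtain ⟨hPf, hHPf⟩ := hcomm f hf
  have hval : H ⟨P f, hPf⟩ = w + z • P f := by
    rw [hHPf, hHf, map_add, ContinuousLinearMap.map_smul, P_fix hP hw]
  have hae2 := H_ae hgraph hPf
  rw [hval] at hae2
  have hPff : (P f : Ω → ℂ) =ᵐ[μ] f := by
    filter_upwards [hae2, Lp.coeFn_add w (z • P f), Lp.coeFn_smul z (P f), hae]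
      with x e1 e2 e3 e4
    rw [e2, Pi.add_apply, e3, Pi.smul_apply, smul_eq_mul] at e1
    have hne := res_ne hz (m x)
    rw [e4, eq_inv_mul_iff_mul_eq₀ hne]
    linear_combination -e1
  have : P f = f := Lp.ext hPff
  rw [← this]
  exact (hP f).1

noncomputable def phiF (lam : ℝ) (t : ℝ) : ℝ := (t - lam) / ((t - lam) ^ 2 + 1)

lemma phiF_meas (lam : ℝ) : Measurable (phiF lam) := by
  unfold phiF
  fun_prop

lemma phiF_den_pos (lam t : ℝ) : 0 < (t - lam) ^ 2 + 1 := by positivity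

lemma phiF_abs_le_one (lam t : ℝ) : |phiF lam t| ≤ 1 := by
  unfold phiF
  rw [abs_div, abs_of_pos (phiF_den_pos lam t), div_le_one (phiF_den_pos lam t)]
  nlinarith [abs_nonneg (t - lam), _root_.sq_abs (t - lam)]

lemma phiF_mem_Icc (lam t : ℝ) : phiF lam t ∈ Set.Icc (-1 : ℝ) 1 :=
  abs_le.mp (phiF_abs_le_one lam t)

lemma phiF_nonpos (lam : ℝ) {t : ℝ} (ht : t ≤ lam) : phiF lam t ≤ 0 :=
  div_nonpos_of_nonpos_of_nonneg (by linarith) (phiF_den_pos lam t).le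

lemma phiF_pos (lam : ℝ) {t : ℝ} (ht : lam < t) : 0 < phiF lam t :=
  div_pos (by linarith) (phiF_den_pos lam t)

lemma phiF_cast (lam t : ℝ) :
    (phiF lam t : ℂ) =
      2⁻¹ * ((((t : ℂ) - ((lam : ℂ) + Complex.I))⁻¹ +
        ((t : ℂ) - ((lam : ℂ) - Complex.I))⁻¹)) := by
  have h1 : (t : ℂ) - ((lam : ℂ) + Complex.I) ≠ 0 := by
    intro hcon
    have := congrArg Complex.im hcon
    simp [Complex.sub_im, Complex.add_im] at this
  have h2 : (t : ℂ) - ((lam : ℂ) - Complex.I) ≠ 0 := by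
    intro hcon
    have := congrArg Complex.im hcon
    simp [Complex.sub_im] at this
  have h3 : ((t : ℝ) - lam) ^ 2 + 1 ≠ 0 := (phiF_den_pos lam t).ne'
  have h3' : (((t - lam) ^ 2 + 1 : ℝ) : ℂ) ≠ 0 := by
    exact_mod_cast Complex.ofReal_ne_zero.mpr h3
  unfold phiF
  push_cast
  rw [div_eq_iff (by exact_mod_cast h3')]
  field_simp
  ring_nf
  simp [Complex.I_sq]
  ring

lemma im_add_I (lam : ℝ) : ((lam : ℂ) + Complex.I).im ≠ 0 := by simp

lemma im_sub_I (lam : ℝ) : ((lam : ℂ) - Complex.I).im ≠ 0 := by simp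

noncomputable def phiL (hm : Measurable m) (lam : ℝ) (w : Lp ℂ 2 μ) : Lp ℂ 2 μ :=
  (memℒp_mul hm (Complex.measurable_ofReal.comp (phiF_meas lam))
    (C := 1) (fun t => by simpa using phiF_abs_le_one lam t) w).toLp _

lemma phiL_ae (hm : Measurable m) (lam : ℝ) (w : Lp ℂ 2 μ) :
    (phiL hm lam w : Ω → ℂ) =ᵐ[μ] fun x => (phiF lam (m x) : ℂ) * w x :=
  MemLp.coeFn_toLp _

lemma phiL_invariant (hm : Measurable m)
    (hgraph : ∀ u v : Lp ℂ 2 μ,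
      (u, v) ∈ H.graph ↔ (v : Ω → ℂ) =ᵐ[μ] fun x => (m x : ℂ) * u x)
    (hP : IsOrthogonalProjectionOnto (W : Set (Lp ℂ 2 μ)) P)
    (hcomm : ∀ u : Lp ℂ 2 μ, ∀ hu : u ∈ H.domain,
      ∃ hPu : P u ∈ H.domain, H ⟨P u, hPu⟩ = P (H ⟨u, hu⟩))
    (lam : ℝ) {w : Lp ℂ 2 μ} (hw : w ∈ W) :
    phiL hm lam w ∈ W := by
  have heq : phiL hm lam w = (2⁻¹ : ℂ) •
      (resL hm (im_add_I lam) w + resL hm (im_sub_I lam) w) := by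
    apply Lp.ext
    filter_upwards [phiL_ae hm lam w,
      Lp.coeFn_smul (2⁻¹ : ℂ) (resL hm (im_add_I lam) w + resL hm (im_sub_I lam) w),
      Lp.coeFn_add (resL hm (im_add_I lam) w) (resL hm (im_sub_I lam) w),
      resL_ae hm (im_add_I lam) w, resL_ae hm (im_sub_I lam) w] with x e1 e2 e3 e4 e5
    rw [e1, e2, Pi.smul_apply, e3, Pi.add_apply, e4, e5, smul_eq_mul, phiF_cast]
    ring
  rw [heq]
  exact W.smul_mem _ (W.add_mem
    (resolvent_invariant hm hgraph hP hcomm (im_add_I lam) hw)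
    (resolvent_invariant hm hgraph hP hcomm (im_sub_I lam) hw))

lemma polyPhi_meas (lam : ℝ) (p : Polynomial ℝ) :
    Measurable fun t : ℝ => ((p.eval (phiF lam t) : ℝ) : ℂ) :=
  Complex.measurable_ofReal.comp ((p.continuous.measurable).comp (phiF_meas lam))

lemma polyPhi_bd (lam : ℝ) (p : Polynomial ℝ) :
    ∀ t : ℝ, ‖((p.eval (phiF lam t) : ℝ) : ℂ)‖ ≤
      ‖p.toContinuousMapOn (Set.Icc (-1 : ℝ) 1)‖ := by
  intro t
  have h1 := (p.toContinuousMapOn (Set.Icc (-1 : ℝ) 1)).norm_coe_le_norm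
    ⟨phiF lam t, phiF_mem_Icc lam t⟩
  simpa using h1

noncomputable def polyPhiL (hm : Measurable m) (lam : ℝ) (p : Polynomial ℝ)
    (w : Lp ℂ 2 μ) : Lp ℂ 2 μ :=
  (memℒp_mul hm (polyPhi_meas lam p) (polyPhi_bd lam p) w).toLp _

lemma polyPhiL_ae (hm : Measurable m) (lam : ℝ) (p : Polynomial ℝ) (w : Lp ℂ 2 μ) :
    (polyPhiL hm lam p w : Ω → ℂ) =ᵐ[μ] fun x => ((p.eval (phiF lam (m x)) : ℝ) : ℂ) * w x :=
  MemLp.coeFn_toLp _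

lemma polyPhiL_invariant (hm : Measurable m)
    (hgraph : ∀ u v : Lp ℂ 2 μ,
      (u, v) ∈ H.graph ↔ (v : Ω → ℂ) =ᵐ[μ] fun x => (m x : ℂ) * u x)
    (hP : IsOrthogonalProjectionOnto (W : Set (Lp ℂ 2 μ)) P)
    (hcomm : ∀ u : Lp ℂ 2 μ, ∀ hu : u ∈ H.domain,
      ∃ hPu : P u ∈ H.domain, H ⟨P u, hPu⟩ = P (H ⟨u, hu⟩))
    (lam : ℝ) (p : Polynomial ℝ) :
    ∀ w ∈ W, polyPhiL hm lam p w ∈ W := by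
  induction p using Polynomial.induction_on with
  | C a =>
    intro w hw
    have : polyPhiL hm lam (Polynomial.C a) w = (a : ℂ) • w := by
      apply Lp.ext
      filter_upwards [polyPhiL_ae hm lam (Polynomial.C a) w, Lp.coeFn_smul (a : ℂ) w]
        with x e1 e2
      rw [e1, e2, Pi.smul_apply, smul_eq_mul, Polynomial.eval_C]
    rw [this]
    exact W.smul_mem _ hw
  | add p q hp hq =>
    intro w hw
    have : polyPhiL hm lam (p + q) w = polyPhiL hm lam p w + polyPhiL hm lam q w := by
      apply Lp.ext
      filter_upwards [polyPhiL_ae hm lam (p + q) w, polyPhiL_ae hm lam p w,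
        polyPhiL_ae hm lam q w,
        Lp.coeFn_add (polyPhiL hm lam p w) (polyPhiL hm lam q w)] with x e1 e2 e3 e4
      rw [e1, e4, Pi.add_apply, e2, e3, Polynomial.eval_add]
      push_cast
      ring
    rw [this]
    exact W.add_mem (hp w hw) (hq w hw)
  | monomial n a ih =>
    intro w hw
    have key : polyPhiL hm lam (Polynomial.C a * Polynomial.X ^ (n + 1)) w =
        phiL hm lam (polyPhiL hm lam (Polynomial.C a * Polynomial.X ^ n) w) := by
      apply Lp.ext
      filter_upwards [polyPhiL_ae hm lam (Polynomial.C a * Polynomial.X ^ (n + 1)) w,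
        phiL_ae hm lam (polyPhiL hm lam (Polynomial.C a * Polynomial.X ^ n) w),
        polyPhiL_ae hm lam (Polynomial.C a * Polynomial.X ^ n) w] with x e1 e2 e3
      rw [e1, e2, e3]
      simp only [Polynomial.eval_mul, Polynomial.eval_C, Polynomial.eval_pow,
        Polynomial.eval_X]
      push_cast
      ring
    rw [key]
    exact phiL_invariant hm hgraph hP hcomm lam (ih w hw)

/-- Weierstrass approximation of `max · 0` on `[-1,1]`. -/
lemma exists_poly_near_posPart (n : ℕ) :
    ∃ p : Polynomial ℝ, ∀ y ∈ Set.Icc (-1 : ℝ) 1,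
      |p.eval y - max y 0| ≤ 1 / (n + 1) := by
  set ψ : C(Set.Icc (-1 : ℝ) 1, ℝ) :=
    ⟨fun y => max (y : ℝ) 0, (continuous_subtype_val.max continuous_const)⟩ with hψdef
  have hmem : ψ ∈ closure ((polynomialFunctions (Set.Icc (-1 : ℝ) 1)) :
      Set C(Set.Icc (-1 : ℝ) 1, ℝ)) := by
    rw [← Subalgebra.topologicalClosure_coe, polynomialFunctions_closure_eq_top (-1 : ℝ) 1]
    trivial
  have hpos : (0 : ℝ) < 1 / (n + 1) := by positivity
  obtain ⟨g, hgmem, hgdist⟩ := Metric.mem_closure_iff.mp hmem _ hpos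
  rw [polynomialFunctions_coe] at hgmem
  obtain ⟨p, rfl⟩ := hgmem
  refine ⟨p, fun y hy => ?_⟩
  have h1 := ContinuousMap.dist_apply_le_dist (f := ψ)
    (g := Polynomial.toContinuousMapOnAlgHom (Set.Icc (-1 : ℝ) 1) p) ⟨y, hy⟩
  have hval : ((Polynomial.toContinuousMapOnAlgHom (Set.Icc (-1 : ℝ) 1)) p) ⟨y, hy⟩
      = p.eval y := by
    simp [Polynomial.toContinuousMapOnAlgHom, Polynomial.toContinuousMapOn,
      Polynomial.toContinuousMap]
  have hψval : ψ ⟨y, hy⟩ = max y 0 := rfl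
  rw [Real.dist_eq, hval, hψval, abs_sub_comm] at h1
  exact h1.trans hgdist.le

noncomputable def thetaF (lam : ℝ) (t : ℝ) : ℝ := max (phiF lam t) 0

lemma thetaF_meas (lam : ℝ) : Measurable (thetaF lam) :=
  (phiF_meas lam).max measurable_const

lemma thetaF_nonneg (lam t : ℝ) : 0 ≤ thetaF lam t := le_max_right _ _

lemma thetaF_le_one (lam t : ℝ) : thetaF lam t ≤ 1 :=
  max_le ((abs_le.mp (phiF_abs_le_one lam t)).2) zero_le_one

lemma thetaF_bd (lam : ℝ) : ∀ t : ℝ, ‖((thetaF lam t : ℝ) : ℂ)‖ ≤ 1 := by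
  intro t
  rw [Complex.norm_real, Real.norm_eq_abs, _root_.abs_of_nonneg (thetaF_nonneg lam t)]
  exact thetaF_le_one lam t

lemma thetaF_eq_zero (lam : ℝ) {t : ℝ} (ht : t ≤ lam) : thetaF lam t = 0 :=
  max_eq_right (phiF_nonpos lam ht)

lemma thetaF_pos (lam : ℝ) {t : ℝ} (ht : lam < t) : 0 < thetaF lam t :=
  lt_max_of_lt_left (phiF_pos lam ht)

lemma thetaF_mul_bd (lam : ℝ) : ∀ t : ℝ,
    ‖((t * thetaF lam t : ℝ) : ℂ)‖ ≤ 1 + |lam| := by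
  intro t
  rw [Complex.norm_real, Real.norm_eq_abs]
  by_cases ht : t ≤ lam
  · rw [thetaF_eq_zero lam ht]
    simp
    positivity
  · push_neg at ht
    have h0 : thetaF lam t = phiF lam t := max_eq_left (phiF_pos lam ht).le
    rw [h0]
    have hden := phiF_den_pos lam t
    have h1 : |t * phiF lam t| = |t * (t - lam)| / ((t - lam) ^ 2 + 1) := by
      unfold phiF
      rw [← mul_div_assoc, abs_div, abs_of_pos hden]
    rw [h1, div_le_iff₀ hden]
    have h2 : |t * (t - lam)| ≤ (t - lam) ^ 2 + |lam| * (t - lam) := by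
      have he : t * (t - lam) = (t - lam) ^ 2 + lam * (t - lam) := by ring
      rw [he]
      refine (abs_add_le _ _).trans ?_
      have ha : |((t - lam) ^ 2 : ℝ)| = (t - lam) ^ 2 := abs_of_nonneg (sq_nonneg _)
      have hb : |lam * (t - lam)| = |lam| * (t - lam) := by
        rw [abs_mul, _root_.abs_of_nonneg (by linarith : (0 : ℝ) ≤ t - lam)]
      rw [ha, hb]
    nlinarith [abs_nonneg lam, sq_nonneg (t - lam), sq_nonneg (t - lam - 1)]

noncomputable def thetaL (hm : Measurable m) (lam : ℝ) (w : Lp ℂ 2 μ) : Lp ℂ 2 μ :=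
  (memℒp_mul hm (Complex.measurable_ofReal.comp (thetaF_meas lam))
    (thetaF_bd lam) w).toLp _

lemma thetaL_ae (hm : Measurable m) (lam : ℝ) (w : Lp ℂ 2 μ) :
    (thetaL hm lam w : Ω → ℂ) =ᵐ[μ] fun x => (thetaF lam (m x) : ℂ) * w x :=
  MemLp.coeFn_toLp _

lemma thetaL_invariant (hm : Measurable m)
    (hgraph : ∀ u v : Lp ℂ 2 μ,
      (u, v) ∈ H.graph ↔ (v : Ω → ℂ) =ᵐ[μ] fun x => (m x : ℂ) * u x)
    (hWc : IsClosed (W : Set (Lp ℂ 2 μ)))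
    (hP : IsOrthogonalProjectionOnto (W : Set (Lp ℂ 2 μ)) P)
    (hcomm : ∀ u : Lp ℂ 2 μ, ∀ hu : u ∈ H.domain,
      ∃ hPu : P u ∈ H.domain, H ⟨P u, hPu⟩ = P (H ⟨u, hu⟩))
    (lam : ℝ) {w : Lp ℂ 2 μ} (hw : w ∈ W) :
    thetaL hm lam w ∈ W := by
  choose ps hps using exists_poly_near_posPart
  have hmem : ∀ n : ℕ, polyPhiL hm lam (ps n) w ∈ W := fun n =>
    polyPhiL_invariant hm hgraph hP hcomm lam (ps n) w hw
  have hnorm : ∀ n : ℕ, ‖polyPhiL hm lam (ps n) w - thetaL hm lam w‖ ≤ 1 / (n + 1) * ‖w‖ := by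
    intro n
    set d := polyPhiL hm lam (ps n) w - thetaL hm lam w with hddef
    obtain ⟨hint_d, heq_d⟩ := norm_sq_integral d
    obtain ⟨hint_w, heq_w⟩ := norm_sq_integral w
    have hae_d : (d : Ω → ℂ) =ᵐ[μ]
        fun x => (((ps n).eval (phiF lam (m x)) - thetaF lam (m x) : ℝ) : ℂ) * w x := by
      filter_upwards [Lp.coeFn_sub (polyPhiL hm lam (ps n) w) (thetaL hm lam w),
        polyPhiL_ae hm lam (ps n) w, thetaL_ae hm lam w] with x e1 e2 e3
      rw [hddef, e1, Pi.sub_apply, e2, e3]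
      push_cast
      ring
    have hcb : ∀ x : Ω, |(ps n).eval (phiF lam (m x)) - thetaF lam (m x)| ≤ 1 / (n + 1) :=
      fun x => hps n _ (phiF_mem_Icc lam (m x))
    have hsq : ‖d‖ ^ 2 ≤ (1 / (n + 1) * ‖w‖) ^ 2 := by
      rw [heq_d]
      have hle : ∫ x, ‖d x‖ ^ 2 ∂μ ≤ ∫ x, (1 / (n + 1 : ℝ)) ^ 2 * ‖w x‖ ^ 2 ∂μ := by
        refine integral_mono_ae hint_d (hint_w.const_mul _) ?_
        filter_upwards [hae_d] with x hx
        have h1 : ‖d x‖ = |(ps n).eval (phiF lam (m x)) - thetaF lam (m x)| * ‖w x‖ := by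
          rw [hx, norm_mul, Complex.norm_real, Real.norm_eq_abs]
        calc ‖d x‖ ^ 2
            = (|(ps n).eval (phiF lam (m x)) - thetaF lam (m x)| * ‖w x‖) ^ 2 := by rw [h1]
          _ ≤ (1 / (n + 1) * ‖w x‖) ^ 2 := by
              refine pow_le_pow_left₀ (by positivity) ?_ 2
              exact mul_le_mul_of_nonneg_right (hcb x) (norm_nonneg _)
          _ = (1 / (n + 1 : ℝ)) ^ 2 * ‖w x‖ ^ 2 := by ring
      calc ∫ x, ‖d x‖ ^ 2 ∂μ ≤ ∫ x, (1 / (n + 1 : ℝ)) ^ 2 * ‖w x‖ ^ 2 ∂μ := hle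
        _ = (1 / (n + 1 : ℝ)) ^ 2 * ∫ x, ‖w x‖ ^ 2 ∂μ := integral_const_mul _ _
        _ = (1 / (n + 1) * ‖w‖) ^ 2 := by rw [← heq_w]; ring
    have hnn : (0 : ℝ) ≤ 1 / (n + 1) * ‖w‖ := by positivity
    calc ‖d‖ = Real.sqrt (‖d‖ ^ 2) := (Real.sqrt_sq (norm_nonneg d)).symm
      _ ≤ Real.sqrt ((1 / (n + 1) * ‖w‖) ^ 2) := Real.sqrt_le_sqrt hsq
      _ = 1 / (n + 1) * ‖w‖ := Real.sqrt_sq hnn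
  have htend : Tendsto (fun n => polyPhiL hm lam (ps n) w) atTop (𝓝 (thetaL hm lam w)) := by
    rw [tendsto_iff_norm_sub_tendsto_zero]
    refine squeeze_zero (fun n => norm_nonneg _) hnorm ?_
    have h0 : Tendsto (fun n : ℕ => 1 / (n + 1 : ℝ)) atTop (𝓝 0) :=
      tendsto_one_div_add_atTop_nhds_zero_nat
    simpa using h0.mul_const ‖w‖
  exact hWc.mem_of_tendsto htend (Eventually.of_forall hmem)

lemma part_b (hm : Measurable m)
    (hgraph : ∀ u v : Lp ℂ 2 μ,
      (u, v) ∈ H.graph ↔ (v : Ω → ℂ) =ᵐ[μ] fun x => (m x : ℂ) * u x)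
    (lam : ℝ) (hWc : IsClosed (W : Set (Lp ℂ 2 μ)))
    (hP : IsOrthogonalProjectionOnto (W : Set (Lp ℂ 2 μ)) P)
    (hcomm : ∀ u : Lp ℂ 2 μ, ∀ hu : u ∈ H.domain,
      ∃ hPu : P u ∈ H.domain, H ⟨P u, hPu⟩ = P (H ⟨u, hu⟩))
    (hform : ∀ u : Lp ℂ 2 μ, ∀ hu : u ∈ H.domain, u ∈ W →
      (@inner ℂ _ _ (H ⟨u, hu⟩) u).re ≤ lam * ‖u‖ ^ 2) :
    (W : Set (Lp ℂ 2 μ)) ⊆ {u : Lp ℂ 2 μ | ∀ᵐ x ∂μ, lam < m x → u x = 0} := by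
  intro w hw
  set v := thetaL hm lam w with hvdef
  have hvW : v ∈ W := thetaL_invariant hm hgraph hWc hP hcomm lam hw
  -- v is in the domain of H
  have hdom : ((memℒp_mul hm
      (Complex.measurable_ofReal.comp ((measurable_id.mul (thetaF_meas lam))))
      (thetaF_mul_bd lam) w).toLp _ : Ω → ℂ) =ᵐ[μ] fun x => (m x : ℂ) * v x := by
    filter_upwards [MemLp.coeFn_toLp (memℒp_mul hm
      (Complex.measurable_ofReal.comp ((measurable_id.mul (thetaF_meas lam))))
      (thetaF_mul_bd lam) w), thetaL_ae hm lam w] with x e1 e2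
    rw [e1, e2]
    simp only [Function.comp_apply, Pi.mul_apply, id_eq]
    push_cast
    ring
  obtain ⟨hv, _⟩ := of_graph hgraph hdom
  have hbound := hform v hv hvW
  obtain ⟨hint_m, heq_m⟩ := inner_H_re (H_ae hgraph hv)
  obtain ⟨hint_v, heq_v⟩ := norm_sq_integral v
  rw [heq_m, heq_v] at hbound
  set G : Ω → ℝ := fun x => (m x - lam) * ‖v x‖ ^ 2 with hGdef
  have hGint : Integrable G μ := by
    have : G = fun x => m x * ‖v x‖ ^ 2 - lam * ‖v x‖ ^ 2 := by
      funext x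
      simp only [hGdef]
      ring
    rw [this]
    exact hint_m.sub (hint_v.const_mul lam)
  have hGle : ∫ x, G x ∂μ ≤ 0 := by
    have : ∫ x, G x ∂μ = (∫ x, m x * ‖v x‖ ^ 2 ∂μ) - lam * ∫ x, ‖v x‖ ^ 2 ∂μ := by
      have h1 : ∫ x, G x ∂μ = (∫ x, m x * ‖v x‖ ^ 2 ∂μ) - ∫ x, lam * ‖v x‖ ^ 2 ∂μ := by
        rw [← integral_sub hint_m (hint_v.const_mul lam)]
        congr 1
        funext x
        simp only [hGdef]
        ring
      rw [h1, integral_const_mul]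
    rw [this]
    linarith
  have hGnn : 0 ≤ᵐ[μ] G := by
    filter_upwards [thetaL_ae hm lam w] with x hx
    by_cases hlt : lam < m x
    · have h1 : 0 ≤ m x - lam := by linarith
      positivity
    · push_neg at hlt
      have h1 : thetaF lam (m x) = 0 := thetaF_eq_zero lam hlt
      simp only [hGdef, Pi.zero_apply]
      rw [hx, h1]
      simp
  have hG0 : G =ᵐ[μ] 0 := by
    refine (integral_eq_zero_iff_of_nonneg_ae hGnn hGint).mp ?_
    exact le_antisymm hGle (integral_nonneg_of_ae hGnn)
  filter_upwards [hG0, thetaL_ae hm lam w] with x hx1 hx2 hlt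
  have h1 : (m x - lam) * ‖v x‖ ^ 2 = 0 := hx1
  have h2 : ‖v x‖ ^ 2 = 0 := by
    rcases mul_eq_zero.mp h1 with h | h
    · exfalso; linarith
    · exact h
  have h3 : v x = 0 := by
    have := pow_eq_zero_iff (n := 2) (by norm_num) |>.mp h2
    exact norm_eq_zero.mp this
  rw [hx2] at h3
  rcases mul_eq_zero.mp h3 with h | h
  · exfalso
    have := thetaF_pos lam hlt
    rw [Complex.ofReal_eq_zero] at h
    linarith
  · exact h

end PartB

end Stmt16Aux

/-- Let `(Ω, μ)` be σ-finite, `m : Ω → ℝ` measurable, and `H` the maximal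
multiplication operator `Hu = mu` on `L²(μ)` (described through its graph).  For `λ ∈ ℝ` let
`V_λ = {u ∈ L²(μ) : u = 0` a.e. on `{m > λ}}`.  Then (a) `V_λ` is a closed subspace; its
orthogonal projection `P` maps `D(H)` into `D(H)`, commutes with `H` on `D(H)`, and
`(Hu, u) ≤ λ (u, u)` for `u ∈ V_λ ∩ D(H)`; and (b) `V_λ` is the largest closed subspace with
these properties: any closed subspace `W` whose orthogonal projection has these properties is
contained in `V_λ`.  (Hence `V_λ = E(λ)L²(μ)` for the spectral family `E` of `H`.) -/
theorem stmt_16 {Ω : Type*} [MeasurableSpace Ω] (μ : Measure Ω) [SigmaFinite μ]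
    (m : Ω → ℝ) (hm : Measurable m)
    (H : Lp ℂ 2 μ →ₗ.[ℂ] Lp ℂ 2 μ)
    (hgraph : ∀ u v : Lp ℂ 2 μ,
      (u, v) ∈ H.graph ↔ (v : Ω → ℂ) =ᵐ[μ] fun x => (m x : ℂ) * u x)
    (lam : ℝ) :
    -- (a) `V_λ` is a closed subspace …
    (∃ V : Submodule ℂ (Lp ℂ 2 μ),
      (V : Set (Lp ℂ 2 μ)) = {u : Lp ℂ 2 μ | ∀ᵐ x ∂μ, lam < m x → u x = 0} ∧
      IsClosed (V : Set (Lp ℂ 2 μ))) ∧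
    -- … whose orthogonal projection maps `D(H)` into `D(H)` and commutes with `H` …
    (∀ P : Lp ℂ 2 μ →L[ℂ] Lp ℂ 2 μ,
      IsOrthogonalProjectionOnto {u : Lp ℂ 2 μ | ∀ᵐ x ∂μ, lam < m x → u x = 0} P →
      ∀ u : Lp ℂ 2 μ, ∀ hu : u ∈ H.domain,
        ∃ hPu : P u ∈ H.domain, H ⟨P u, hPu⟩ = P (H ⟨u, hu⟩)) ∧
    -- … and on which the quadratic form of `H` is bounded by `λ`:
    (∀ u : Lp ℂ 2 μ, ∀ hu : u ∈ H.domain,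
      (∀ᵐ x ∂μ, lam < m x → u x = 0) →
      (@inner ℂ _ _ (H ⟨u, hu⟩) u).re ≤ lam * ‖u‖^2) ∧
    -- (b) maximality:
    (∀ W : Submodule ℂ (Lp ℂ 2 μ), IsClosed (W : Set (Lp ℂ 2 μ)) →
      ∀ P : Lp ℂ 2 μ →L[ℂ] Lp ℂ 2 μ,
        IsOrthogonalProjectionOnto (W : Set (Lp ℂ 2 μ)) P →
        (∀ u : Lp ℂ 2 μ, ∀ hu : u ∈ H.domain,
          ∃ hPu : P u ∈ H.domain, H ⟨P u, hPu⟩ = P (H ⟨u, hu⟩)) →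
        (∀ u : Lp ℂ 2 μ, ∀ hu : u ∈ H.domain, u ∈ W →
          (@inner ℂ _ _ (H ⟨u, hu⟩) u).re ≤ lam * ‖u‖^2) →
        (W : Set (Lp ℂ 2 μ)) ⊆ {u : Lp ℂ 2 μ | ∀ᵐ x ∂μ, lam < m x → u x = 0}) := by
  refine ⟨?_, ?_, ?_, ?_⟩
  · -- (a) the subspace and its closedness
    refine ⟨{ carrier := {u : Lp ℂ 2 μ | ∀ᵐ x ∂μ, lam < m x → u x = 0},
              add_mem' := ?_, zero_mem' := ?_, smul_mem' := ?_ }, rfl, ?_⟩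
    · intro a b ha hb
      filter_upwards [ha, hb, Lp.coeFn_add a b] with x hxa hxb hxs hlt
      rw [hxs, Pi.add_apply, hxa hlt, hxb hlt, add_zero]
    · filter_upwards [Lp.coeFn_zero ℂ 2 μ] with x hx _
      rw [hx]
      rfl
    · intro c a ha
      filter_upwards [ha, Lp.coeFn_smul c a] with x hxa hxs hlt
      rw [hxs, Pi.smul_apply, hxa hlt, smul_zero]
    · exact Stmt16Aux.isClosed_S hm lam
  · -- commuting with the orthogonal projection
    intro P hP u hu
    exact Stmt16Aux.part_a2 hm hgraph lam hP u hu
  · -- the form bound on V_λ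
    intro u hu hS
    exact Stmt16Aux.part_a3 hm hgraph lam u hu hS
  · -- maximality
    intro W hWc P hP hcomm hform
    exact Stmt16Aux.part_b hm hgraph lam hWc hP hcomm hform
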